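/- For any natural number n ≥ 1 and any m ≥ 1, the number of solutions x modulo n of the congruence x^m ≡ 1 (mod n) is at most 2·m^ω(n), where ω(n) is the number of distinct prime divisors of n. -/

import Mathlib

-- helper: x^m = 1, m ≥ 1 ⇒ IsUnit x
lemma aux_isUnit {M : Type*} [CommMonoid M] {x : M} {m : ℕ} (hm : 1 ≤ m) (h : x ^ m = 1) :
    IsUnit x :=
  IsUnit.of_mul_eq_one (x ^ (m - 1)) (by
    rw [← pow_succ']
    rwa [Nat.sub_add_cancel hm])

-- kernel order lemma, odd p: u ≡ 1 mod p ⇒ u ^ p^(k-1) = 1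
lemma aux_ker_pow (p k : ℕ) (hp : p.Prime) (hodd : p ≠ 2) (hk : 1 ≤ k)
    (u : ZMod (p ^ k)) (hu : ((u.val : ℕ) : ZMod p) = 1) :
    u ^ p ^ (k - 1) = 1 := by
  haveI : Fact p.Prime := ⟨hp⟩
  haveI : NeZero (p ^ k) := ⟨pow_ne_zero _ hp.pos.ne'⟩
  have hoddp : Odd p := hp.odd_of_ne_two hodd
  set a : ℤ := (u.val : ℤ) with ha
  have h1 : (p : ℤ) ∣ a - 1 := by
    rwa [← ZMod.intCast_zmod_eq_zero_iff_dvd, Int.cast_sub, Int.cast_one, sub_eq_zero,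
      Int.cast_natCast]
  have hx : ¬ (p : ℤ) ∣ a := by
    intro h
    have : (p : ℤ) ∣ 1 := (dvd_sub_right h).mp (by simpa using h1)
    have := Int.le_of_dvd one_pos this
    exact absurd this (by exact_mod_cast hp.one_lt.not_ge)
  have lte := Int.emultiplicity_pow_sub_pow hp hoddp (by simpa using h1) hx (p ^ (k - 1))
  rw [one_pow] at lte
  have hm1 : (1 : ℕ∞) ≤ emultiplicity (p : ℤ) (a - 1) :=
    le_emultiplicity_of_pow_dvd (by simpa using h1)
  have he : emultiplicity p (p ^ (k - 1)) = (k - 1 : ℕ) :=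
    emultiplicity_pow_self_of_prime hp.prime (k - 1)
  have hk' : (k : ℕ∞) ≤ emultiplicity (p : ℤ) (a ^ p ^ (k - 1) - 1) := by
    rw [lte, he]
    calc (k : ℕ∞) = (1 : ℕ∞) + ((k - 1 : ℕ) : ℕ∞) := by
          rw [← Nat.cast_one, ← Nat.cast_add]
          norm_cast
          omega
      _ ≤ _ := add_le_add hm1 le_rfl
  have hdvd : (p : ℤ) ^ k ∣ a ^ p ^ (k - 1) - 1 := pow_dvd_of_le_emultiplicity hk'
  have : ((a ^ p ^ (k - 1) - 1 : ℤ) : ZMod (p ^ k)) = 0 := by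
    rw [ZMod.intCast_zmod_eq_zero_iff_dvd]
    exact_mod_cast hdvd
  have hu' : u = ((u.val : ℕ) : ZMod (p ^ k)) := (ZMod.natCast_rightInverse u).symm
  rw [hu']
  push_cast at this
  rw [sub_eq_zero] at this
  rw [ha] at this
  push_cast at this
  exact_mod_cast this

-- p = 2 : every unit u of ZMod 2^k satisfies u ^ 2^(k-1) = 1
lemma aux_two_pow (k : ℕ) (hk : 1 ≤ k) (u : ZMod (2 ^ k)) (hu : IsUnit u) :
    u ^ 2 ^ (k - 1) = 1 := by
  obtain ⟨v, rfl⟩ := hu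
  have h := ZMod.pow_totient v
  have ht : Nat.totient (2 ^ k) = 2 ^ (k - 1) := by
    rw [Nat.totient_prime_pow Nat.prime_two hk]
    simp
  rw [ht] at h
  calc (v : ZMod (2 ^ k)) ^ 2 ^ (k - 1) = ((v ^ 2 ^ (k - 1) : (ZMod (2 ^ k))ˣ) : ZMod (2 ^ k)) := by
        push_cast; ring
    _ = 1 := by rw [h]; rfl

-- main "unit is 1" lemma
lemma aux_eq_one (p k m' : ℕ) (hp : p.Prime) (hk : 1 ≤ k) (hm' : 1 ≤ m') (hpm : ¬ p ∣ m')
    (u : ZMod (p ^ k)) (hu : u ^ m' = 1)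
    (hcast : p ≠ 2 → ((u.val : ℕ) : ZMod p) = 1) : u = 1 := by
  have h1 : orderOf u ∣ m' := orderOf_dvd_of_pow_eq_one hu
  have h2 : u ^ p ^ (k - 1) = 1 := by
    by_cases hp2 : p = 2
    · subst hp2
      exact aux_two_pow k hk u (aux_isUnit hm' hu)
    · exact aux_ker_pow p k hp hp2 hk u (hcast hp2)
  have h3 : orderOf u ∣ p ^ (k - 1) := orderOf_dvd_of_pow_eq_one h2
  have hcop : Nat.Coprime m' (p ^ (k - 1)) :=
    (((Nat.Prime.coprime_iff_not_dvd hp).mpr hpm).symm).pow_right _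
  have : orderOf u ∣ 1 := hcop ▸ Nat.dvd_gcd h1 h3
  rw [← orderOf_eq_one_iff]
  exact Nat.dvd_one.mp this

-- z^(p^e) = 1 in ZMod p^k, p odd, e < k  ⇒  p^(k-e) ∣ z.val - 1  (as naturals), and 1 ≤ z.val
lemma aux_root_cong (p k e : ℕ) (hp : p.Prime) (hp2 : p ≠ 2) (hk : 1 ≤ k) (hek : e < k)
    (z : ZMod (p ^ k)) (hz : z ^ p ^ e = 1) :
    1 ≤ z.val ∧ p ^ (k - e) ∣ z.val - 1 := by
  haveI : Fact p.Prime := ⟨hp⟩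
  haveI : NeZero (p ^ k) := ⟨pow_ne_zero _ hp.pos.ne'⟩
  have hz' : z = ((z.val : ℕ) : ZMod (p ^ k)) := (ZMod.natCast_rightInverse z).symm
  set a : ℕ := z.val with ha
  -- cast down to ZMod p : a ≡ 1 mod p
  have hcast : ((a : ℕ) : ZMod p) = 1 := by
    have : ((a ^ p ^ e : ℕ) : ZMod (p ^ k)) = 1 := by push_cast; rw [← hz']; exact hz
    have hmap := congrArg (ZMod.castHom (dvd_pow_self p (by omega : k ≠ 0)) (ZMod p)) this
    rw [map_natCast, map_one] at hmap
    push_cast at hmap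
    rwa [ZMod.pow_card_pow] at hmap
  have h1 : (p : ℤ) ∣ (a : ℤ) - 1 := by
    rwa [← ZMod.intCast_zmod_eq_zero_iff_dvd, Int.cast_sub, Int.cast_one, sub_eq_zero,
      Int.cast_natCast]
  have ha1 : 1 ≤ a := by
    rcases Nat.eq_zero_or_pos a with h | h
    · exfalso
      have hd : (p : ℤ) ∣ 1 := dvd_neg.mp (by simpa [h] using h1)
      have := Int.le_of_dvd one_pos hd
      exact absurd this (by exact_mod_cast hp.one_lt.not_ge)
    · exact h
  refine ⟨ha1, ?_⟩
  by_cases haa : a = 1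
  · simp [haa]
  have hx : ¬ (p : ℤ) ∣ (a : ℤ) := by
    intro h
    have : (p : ℤ) ∣ 1 := (dvd_sub_right h).mp (by simpa using h1)
    have := Int.le_of_dvd one_pos this
    exact absurd this (by exact_mod_cast hp.one_lt.not_ge)
  have lte := Int.emultiplicity_pow_sub_pow hp (hp.odd_of_ne_two hp2) (by simpa using h1) hx (p ^ e)
  rw [one_pow] at lte
  have hdvdk : ((p : ℤ)) ^ k ∣ (a : ℤ) ^ p ^ e - 1 := by
    have h0 : (((a : ℤ) ^ p ^ e - 1 : ℤ) : ZMod (p ^ k)) = 0 := by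
      push_cast
      rw [← hz', hz, sub_self]
    have := (ZMod.intCast_zmod_eq_zero_iff_dvd _ _).mp h0
    exact_mod_cast this
  have hm1 : (1 : ℕ∞) ≤ emultiplicity (p : ℤ) ((a : ℤ) - 1) :=
    le_emultiplicity_of_pow_dvd (by simpa using h1)
  have he : emultiplicity p (p ^ e) = (e : ℕ) := emultiplicity_pow_self_of_prime hp.prime e
  have hk' : (k : ℕ∞) ≤ emultiplicity (p : ℤ) ((a : ℤ) ^ p ^ e - 1) :=
    le_emultiplicity_of_pow_dvd hdvdk
  rw [lte, he] at hk'
  have hke : ((k - e : ℕ) : ℕ∞) ≤ emultiplicity (p : ℤ) ((a : ℤ) - 1) := by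
    have := tsub_le_iff_right.mpr hk'
    calc ((k - e : ℕ) : ℕ∞) = (k : ℕ∞) - (e : ℕ∞) := ENat.coe_sub k e
      _ ≤ _ := this
  have : (p : ℤ) ^ (k - e) ∣ (a : ℤ) - 1 := pow_dvd_of_le_emultiplicity hke
  have : ((p ^ (k - e) : ℕ) : ℤ) ∣ ((a - 1 : ℕ) : ℤ) := by
    push_cast [Nat.cast_sub ha1]
    exact_mod_cast this
  exact_mod_cast this

lemma aux_count_Z_odd (p k e : ℕ) (hp : p.Prime) (hp2 : p ≠ 2) (hk : 1 ≤ k) :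
    Nat.card {z : ZMod (p ^ k) // z ^ p ^ e = 1} ≤ p ^ e := by
  haveI : Fact p.Prime := ⟨hp⟩
  haveI : NeZero (p ^ k) := ⟨pow_ne_zero _ hp.pos.ne'⟩
  rcases le_or_gt k e with hke | hek
  · calc Nat.card {z : ZMod (p ^ k) // z ^ p ^ e = 1}
        ≤ Nat.card (ZMod (p ^ k)) := Nat.card_le_card_of_injective _ Subtype.val_injective
      _ = p ^ k := by rw [Nat.card_eq_fintype_card, ZMod.card]
      _ ≤ p ^ e := Nat.pow_le_pow_right hp.pos hke
  · have hpow : 0 < p ^ (k - e) := pow_pos hp.pos _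
    have key : ∀ z : {z : ZMod (p ^ k) // z ^ p ^ e = 1},
        (z.1.val - 1) / p ^ (k - e) < p ^ e := by
      rintro ⟨z, hz⟩
      obtain ⟨h1, -⟩ := aux_root_cong p k e hp hp2 hk hek z hz
      have hlt : z.val < p ^ k := ZMod.val_lt z
      rw [Nat.div_lt_iff_lt_mul hpow]
      calc z.val - 1 < p ^ k := by omega
        _ = p ^ e * p ^ (k - e) := by rw [← pow_add]; congr 1; omega
    have hinj : Function.Injective
        (fun z : {z : ZMod (p ^ k) // z ^ p ^ e = 1} =>
          (⟨(z.1.val - 1) / p ^ (k - e), key z⟩ : Fin (p ^ e))) := by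
      rintro ⟨z₁, hz₁⟩ ⟨z₂, hz₂⟩ h
      simp only [Fin.mk.injEq] at h
      obtain ⟨ha₁, hd₁⟩ := aux_root_cong p k e hp hp2 hk hek z₁ hz₁
      obtain ⟨ha₂, hd₂⟩ := aux_root_cong p k e hp hp2 hk hek z₂ hz₂
      have e₁ : z₁.val = 1 + p ^ (k - e) * ((z₁.val - 1) / p ^ (k - e)) := by
        rw [Nat.mul_div_cancel' hd₁]; omega
      have e₂ : z₂.val = 1 + p ^ (k - e) * ((z₂.val - 1) / p ^ (k - e)) := by
        rw [Nat.mul_div_cancel' hd₂]; omega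
      have : z₁.val = z₂.val := by rw [e₁, e₂, h]
      exact Subtype.ext (ZMod.val_injective _ this)
    calc Nat.card {z : ZMod (p ^ k) // z ^ p ^ e = 1}
        ≤ Nat.card (Fin (p ^ e)) := Nat.card_le_card_of_injective _ hinj
      _ = p ^ e := Nat.card_eq_fintype_card.trans (Fintype.card_fin _)

lemma aux_root_cong_two (k e : ℕ) (he : 1 ≤ e) (hek : e + 2 ≤ k)
    (z : ZMod (2 ^ k)) (hz : z ^ 2 ^ e = 1) :
    1 ≤ z.val ∧ (2 ^ (k - e) ∣ z.val - 1 ∨ 2 ^ (k - e) ∣ z.val + 1) := by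
  haveI : NeZero (2 ^ k) := ⟨pow_ne_zero _ two_ne_zero⟩
  have hz' : z = ((z.val : ℕ) : ZMod (2 ^ k)) := (ZMod.natCast_rightInverse z).symm
  set a : ℕ := z.val with ha
  have hcast : ((a : ℕ) : ZMod 2) = 1 := by
    have : ((a ^ 2 ^ e : ℕ) : ZMod (2 ^ k)) = 1 := by push_cast; rw [← hz']; exact hz
    have hmap := congrArg (ZMod.castHom (dvd_pow_self 2 (by omega : k ≠ 0)) (ZMod 2)) this
    rw [map_natCast, map_one] at hmap
    push_cast at hmap
    rwa [ZMod.pow_card_pow] at hmap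
  have h1 : (2 : ℤ) ∣ (a : ℤ) - 1 := by
    have h0 : (((a : ℤ) - 1 : ℤ) : ZMod 2) = 0 := by
      push_cast
      rw [hcast]
      ring
    exact_mod_cast (ZMod.intCast_zmod_eq_zero_iff_dvd _ 2).mp h0
  have ha1 : 1 ≤ a := by
    rcases Nat.eq_zero_or_pos a with h | h
    · exfalso
      have hd : (2 : ℤ) ∣ 1 := dvd_neg.mp (by simpa [h] using h1)
      norm_num at hd
    · exact h
  refine ⟨ha1, ?_⟩
  by_cases haa : a = 1
  · left; simp [haa]
  have hx : ¬ (2 : ℤ) ∣ (a : ℤ) := by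
    intro h
    have : (2 : ℤ) ∣ 1 := (dvd_sub_right h).mp (by simpa using h1)
    norm_num at this
  have lte := Int.two_pow_sub_pow (x := (a : ℤ)) (y := 1) (n := 2 ^ e)
    (by simpa using h1) hx ((Nat.even_pow' (by omega : e ≠ 0)).mpr even_two)
  rw [one_pow] at lte
  have hdvdk : ((2 : ℤ)) ^ k ∣ (a : ℤ) ^ 2 ^ e - 1 := by
    have h0 : (((a : ℤ) ^ 2 ^ e - 1 : ℤ) : ZMod (2 ^ k)) = 0 := by
      push_cast
      rw [← hz', hz, sub_self]
    have := (ZMod.intCast_zmod_eq_zero_iff_dvd _ _).mp h0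
    exact_mod_cast this
  have he2 : emultiplicity (2 : ℤ) ((2 ^ e : ℕ) : ℤ) = (e : ℕ) := by
    have : ((2 ^ e : ℕ) : ℤ) = (2 : ℤ) ^ e := by push_cast; ring
    rw [this]
    exact emultiplicity_pow_self_of_prime Int.prime_two e
  have hk' : (k : ℕ∞) ≤ emultiplicity (2 : ℤ) ((a : ℤ) ^ 2 ^ e - 1) :=
    le_emultiplicity_of_pow_dvd hdvdk
  set A := emultiplicity (2 : ℤ) ((a : ℤ) + 1) with hA
  set B := emultiplicity (2 : ℤ) ((a : ℤ) - 1) with hB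
  have hsum : (k : ℕ∞) + 1 ≤ A + B + e := by
    calc (k : ℕ∞) + 1 ≤ emultiplicity (2 : ℤ) ((a : ℤ) ^ 2 ^ e - 1) + 1 :=
          add_le_add_left hk' 1
      _ = A + B + e := by rw [lte, he2]
  have hmin : A ≤ 1 ∨ B ≤ 1 := by
    by_contra hcon
    push_neg at hcon
    obtain ⟨hA2, hB2⟩ := hcon
    have hA2' : ((2 : ℕ) : ℕ∞) ≤ A := by
      exact_mod_cast Order.add_one_le_of_lt hA2
    have hB2' : ((2 : ℕ) : ℕ∞) ≤ B := by
      exact_mod_cast Order.add_one_le_of_lt hB2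
    have d1 : (2 : ℤ) ^ 2 ∣ (a : ℤ) + 1 := pow_dvd_of_le_emultiplicity hA2'
    have d2 : (2 : ℤ) ^ 2 ∣ (a : ℤ) - 1 := pow_dvd_of_le_emultiplicity hB2'
    have : (2 : ℤ) ^ 2 ∣ 2 := by
      have := dvd_sub d1 d2
      simpa using this
    norm_num at this
  have key : ∀ C D : ℕ∞, (k : ℕ∞) + 1 ≤ C + D + e → D ≤ 1 →
      ((k - e : ℕ) : ℕ∞) ≤ C := by
    intro C D hCD hD
    have h2 : (k : ℕ∞) + 1 ≤ C + 1 + e := by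
      refine hCD.trans ?_
      gcongr
    have h3 : (k : ℕ∞) + 1 ≤ (C + e) + 1 := by
      calc (k : ℕ∞) + 1 ≤ C + 1 + e := h2
        _ = (C + e) + 1 := by ring
    have h4 : (k : ℕ∞) ≤ C + e :=
      (ENat.add_le_add_iff_right (by simp)).mp h3
    have h5 := tsub_le_iff_right.mpr h4
    calc ((k - e : ℕ) : ℕ∞) = (k : ℕ∞) - (e : ℕ∞) := ENat.coe_sub k e
      _ ≤ C := h5
  rcases hmin with hA1 | hB1
  · -- A ≤ 1 : then 2^(k-e) ∣ a - 1
    left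
    have hC : ((k - e : ℕ) : ℕ∞) ≤ B := key B A (by rw [show B + A + (e:ℕ∞) = A + B + e by ring]; exact hsum) hA1
    have : (2 : ℤ) ^ (k - e) ∣ (a : ℤ) - 1 := pow_dvd_of_le_emultiplicity hC
    have : ((2 ^ (k - e) : ℕ) : ℤ) ∣ ((a - 1 : ℕ) : ℤ) := by
      push_cast [Nat.cast_sub ha1]
      exact_mod_cast this
    exact_mod_cast this
  · -- B ≤ 1 : then 2^(k-e) ∣ a + 1
    right
    have hC : ((k - e : ℕ) : ℕ∞) ≤ A := key A B hsum hB1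
    have : (2 : ℤ) ^ (k - e) ∣ (a : ℤ) + 1 := pow_dvd_of_le_emultiplicity hC
    have : ((2 ^ (k - e) : ℕ) : ℤ) ∣ ((a + 1 : ℕ) : ℤ) := by
      push_cast
      exact_mod_cast this
    exact_mod_cast this

lemma aux_count_Z_two (k e : ℕ) (hk : 1 ≤ k) :
    Nat.card {z : ZMod (2 ^ k) // z ^ 2 ^ e = 1} ≤ 2 * 2 ^ e := by
  haveI : NeZero (2 ^ k) := ⟨pow_ne_zero _ two_ne_zero⟩
  rcases le_or_gt k (e + 1) with hke | hek
  · calc Nat.card {z : ZMod (2 ^ k) // z ^ 2 ^ e = 1}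
        ≤ Nat.card (ZMod (2 ^ k)) := Nat.card_le_card_of_injective _ Subtype.val_injective
      _ = 2 ^ k := by rw [Nat.card_eq_fintype_card, ZMod.card]
      _ ≤ 2 * 2 ^ e := by
          calc (2:ℕ) ^ k ≤ 2 ^ (e + 1) := Nat.pow_le_pow_right (by norm_num) hke
            _ = 2 * 2 ^ e := by ring
  rcases Nat.eq_zero_or_pos e with he0 | he
  · subst he0
    have hinj : Function.Injective
        (fun _ : {z : ZMod (2 ^ k) // z ^ 2 ^ 0 = 1} => (0 : Fin 1)) := by
      rintro ⟨z₁, hz₁⟩ ⟨z₂, hz₂⟩ _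
      simp only [pow_zero, pow_one] at hz₁ hz₂
      exact Subtype.ext (hz₁.trans hz₂.symm)
    calc Nat.card {z : ZMod (2 ^ k) // z ^ 2 ^ 0 = 1}
        ≤ Nat.card (Fin 1) := Nat.card_le_card_of_injective _ hinj
      _ ≤ 2 * 2 ^ 0 := by simp
  -- main case : 1 ≤ e, e + 2 ≤ k
  have hek' : e + 2 ≤ k := by omega
  set M := 2 ^ (k - e) with hM
  have hMpos : 0 < M := pow_pos (by norm_num) _
  have hMk : 2 ^ e * M = 2 ^ k := by rw [hM, ← pow_add]; congr 1; omega
  -- the encoding function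
  have hval : ∀ z : {z : ZMod (2 ^ k) // z ^ 2 ^ e = 1},
      (if M ∣ z.1.val - 1 then (z.1.val - 1) / M else (z.1.val + 1) / M - 1) < 2 ^ e := by
    rintro ⟨z, hz⟩
    have hlt : z.val < 2 ^ k := ZMod.val_lt z
    by_cases hd : M ∣ z.val - 1
    · simp only [hd, if_true]
      rw [Nat.div_lt_iff_lt_mul hMpos]
      calc z.val - 1 < 2 ^ k := by omega
        _ = 2 ^ e * M := hMk.symm
    · simp only [hd, if_false]
      have : (z.val + 1) / M ≤ 2 ^ e := by
        have h1 : z.val + 1 ≤ 2 ^ e * M := by omega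
        calc (z.val + 1) / M ≤ (2 ^ e * M) / M := Nat.div_le_div_right h1
          _ = 2 ^ e := Nat.mul_div_cancel _ hMpos
      have hpos : 0 < 2 ^ e := pow_pos (by norm_num) _
      omega
  have hinj : Function.Injective
      (fun z : {z : ZMod (2 ^ k) // z ^ 2 ^ e = 1} =>
        ((if M ∣ z.1.val - 1 then 0 else 1 : Fin 2), (⟨_, hval z⟩ : Fin (2 ^ e)))) := by
    rintro ⟨z₁, hz₁⟩ ⟨z₂, hz₂⟩ h
    simp only [Prod.mk.injEq, Fin.mk.injEq] at h
    obtain ⟨hb, ht⟩ := h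
    obtain ⟨ha₁, hd₁⟩ := aux_root_cong_two k e he hek' z₁ hz₁
    obtain ⟨ha₂, hd₂⟩ := aux_root_cong_two k e he hek' z₂ hz₂
    have hcases : (M ∣ z₁.val - 1 ∧ M ∣ z₂.val - 1) ∨ (¬ M ∣ z₁.val - 1 ∧ ¬ M ∣ z₂.val - 1) := by
      by_cases h₁ : M ∣ z₁.val - 1 <;> by_cases h₂ : M ∣ z₂.val - 1 <;>
        simp [h₁, h₂] at hb ⊢
    have : z₁.val = z₂.val := by
      rcases hcases with ⟨h₁, h₂⟩ | ⟨h₁, h₂⟩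
      · rw [if_pos h₁, if_pos h₂] at ht
        have e₁ : z₁.val = 1 + M * ((z₁.val - 1) / M) := by
          rw [Nat.mul_div_cancel' h₁]; omega
        have e₂ : z₂.val = 1 + M * ((z₂.val - 1) / M) := by
          rw [Nat.mul_div_cancel' h₂]; omega
        rw [e₁, e₂, ht]
      · rw [if_neg h₁, if_neg h₂] at ht
        have hd₁' : M ∣ z₁.val + 1 := hd₁.resolve_left h₁
        have hd₂' : M ∣ z₂.val + 1 := hd₂.resolve_left h₂
        have hs₁ : 1 ≤ (z₁.val + 1) / M := Nat.one_le_div_iff hMpos |>.mpr (Nat.le_of_dvd (by omega) hd₁')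
        have hs₂ : 1 ≤ (z₂.val + 1) / M := Nat.one_le_div_iff hMpos |>.mpr (Nat.le_of_dvd (by omega) hd₂')
        have e₁ : z₁.val + 1 = M * ((z₁.val + 1) / M) := (Nat.mul_div_cancel' hd₁').symm
        have e₂ : z₂.val + 1 = M * ((z₂.val + 1) / M) := (Nat.mul_div_cancel' hd₂').symm
        have heq : (z₁.val + 1) / M = (z₂.val + 1) / M := by omega
        have : z₁.val + 1 = z₂.val + 1 := by rw [e₁, e₂, heq]
        omega
    exact Subtype.ext (ZMod.val_injective _ this)
  calc Nat.card {z : ZMod (2 ^ k) // z ^ 2 ^ e = 1}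
      ≤ Nat.card (Fin 2 × Fin (2 ^ e)) := Nat.card_le_card_of_injective _ hinj
    _ = 2 * 2 ^ e := by simp [Nat.card_eq_fintype_card]

lemma aux_roots_field (p m' : ℕ) (hp : p.Prime) (hm' : 1 ≤ m') :
    Nat.card {y : ZMod p // y ^ m' = 1} ≤ m' := by
  haveI : Fact p.Prime := ⟨hp⟩
  classical
  rw [Nat.card_eq_fintype_card, Fintype.card_subtype]
  have hsub : (Finset.univ.filter fun y : ZMod p => y ^ m' = 1)
      ⊆ (Polynomial.nthRoots m' (1 : ZMod p)).toFinset := by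
    intro y hy
    rw [Finset.mem_filter] at hy
    rw [Multiset.mem_toFinset, Polynomial.mem_nthRoots (show 0 < m' by omega)]
    exact hy.2
  calc (Finset.univ.filter fun y : ZMod p => y ^ m' = 1).card
      ≤ (Polynomial.nthRoots m' (1 : ZMod p)).toFinset.card := Finset.card_le_card hsub
    _ ≤ Multiset.card (Polynomial.nthRoots m' (1 : ZMod p)) := Multiset.toFinset_card_le _
    _ ≤ m' := Polynomial.card_nthRoots _ _

section
variable (p k m : ℕ)

lemma aux_prime_pow_odd (hp : p.Prime) (hp2 : p ≠ 2) (hk : 1 ≤ k) (hm : 1 ≤ m) :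
    Nat.card {x : ZMod (p ^ k) // x ^ m = 1} ≤ m := by
  haveI : Fact p.Prime := ⟨hp⟩
  haveI : NeZero (p ^ k) := ⟨pow_ne_zero _ hp.pos.ne'⟩
  set e := m.factorization p with he
  set m' := m / p ^ e with hm'def
  have hsplit : p ^ e * m' = m := Nat.ordProj_mul_ordCompl_eq_self m p
  have hm' : 1 ≤ m' := Nat.ordCompl_pos p (by omega)
  have hpm : ¬ p ∣ m' := Nat.not_dvd_ordCompl hp (by omega)
  set c := ZMod.castHom (dvd_pow_self p (by omega : k ≠ 0)) (ZMod p) with hc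
  have hmap1 : ∀ x : {x : ZMod (p ^ k) // x ^ m = 1}, ((c x.1) ^ p ^ e) ^ m' = 1 := by
    rintro ⟨x, hx⟩
    rw [← pow_mul, hsplit, ← map_pow, hx, map_one]
  have hmap2 : ∀ x : {x : ZMod (p ^ k) // x ^ m = 1}, (x.1 ^ m') ^ p ^ e = 1 := by
    rintro ⟨x, hx⟩
    rw [← pow_mul, mul_comm, hsplit, hx]
  have hinj : Function.Injective (fun x : {x : ZMod (p ^ k) // x ^ m = 1} =>
      ((⟨(c x.1) ^ p ^ e, hmap1 x⟩ : {y : ZMod p // y ^ m' = 1}),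
       (⟨x.1 ^ m', hmap2 x⟩ : {z : ZMod (p ^ k) // z ^ p ^ e = 1}))) := by
    rintro ⟨x₁, hx₁⟩ ⟨x₂, hx₂⟩ h
    simp only [Prod.mk.injEq, Subtype.mk.injEq] at h
    obtain ⟨h1, h2⟩ := h
    set u := x₁ * x₂ ^ (m - 1) with hu
    have hx2inv : x₂ * x₂ ^ (m - 1) = 1 := by
      rw [← pow_succ']
      rwa [Nat.sub_add_cancel hm]
    have hum : u ^ m' = 1 := by
      calc u ^ m' = x₁ ^ m' * x₂ ^ ((m - 1) * m') := by rw [hu, mul_pow, ← pow_mul]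
        _ = x₂ ^ m' * x₂ ^ ((m - 1) * m') := by rw [h2]
        _ = x₂ ^ (m' + (m - 1) * m') := by rw [pow_add]
        _ = (x₂ ^ m) ^ m' := by
            rw [← pow_mul]
            congr 1
            have hmm : 1 + (m - 1) = m := by omega
            calc m' + (m - 1) * m' = (1 + (m - 1)) * m' := by ring
              _ = m * m' := by rw [hmm]
        _ = 1 := by rw [hx₂, one_pow]
    have hcast : p ≠ 2 → (((u.val : ℕ) : ZMod p)) = 1 := by
      intro _
      have hcu : ((u.val : ℕ) : ZMod p) = c u := by
        rw [ZMod.natCast_val, ZMod.castHom_apply]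
      rw [hcu]
      have hpow1 : (c u) ^ p ^ e = 1 := by
        calc (c u) ^ p ^ e = (c x₁) ^ p ^ e * ((c x₂) ^ p ^ e) ^ (m - 1) := by
              rw [hu, map_mul, map_pow, mul_pow, ← pow_mul, ← pow_mul, mul_comm (m-1)]
          _ = (c x₂) ^ p ^ e * ((c x₂) ^ p ^ e) ^ (m - 1) := by rw [h1]
          _ = ((c x₂) ^ m) ^ p ^ e := by
              rw [← pow_succ']
              rw [Nat.sub_add_cancel hm, ← pow_mul, ← pow_mul, mul_comm]
          _ = 1 := by rw [← map_pow, hx₂, map_one, one_pow]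
      have hpow2 : (c u) ^ m' = 1 := by rw [← map_pow, hum, map_one]
      have o1 : orderOf (c u) ∣ p ^ e := orderOf_dvd_of_pow_eq_one hpow1
      have o2 : orderOf (c u) ∣ m' := orderOf_dvd_of_pow_eq_one hpow2
      have hcop : Nat.Coprime (p ^ e) m' :=
        ((Nat.Prime.coprime_iff_not_dvd hp).mpr hpm).pow_left _
      have : orderOf (c u) ∣ 1 := hcop ▸ Nat.dvd_gcd o1 o2
      rw [← orderOf_eq_one_iff]
      exact Nat.dvd_one.mp this
    have hu1 : u = 1 := aux_eq_one p k m' hp hk hm' hpm u hum hcast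
    have : x₁ = x₂ := by
      calc x₁ = x₁ * (x₂ * x₂ ^ (m - 1)) := by rw [hx2inv, mul_one]
        _ = u * x₂ := by rw [hu]; ring
        _ = x₂ := by rw [hu1, one_mul]
    exact Subtype.ext this
  calc Nat.card {x : ZMod (p ^ k) // x ^ m = 1}
      ≤ Nat.card ({y : ZMod p // y ^ m' = 1} × {z : ZMod (p ^ k) // z ^ p ^ e = 1}) :=
        Nat.card_le_card_of_injective _ hinj
    _ = Nat.card {y : ZMod p // y ^ m' = 1} * Nat.card {z : ZMod (p ^ k) // z ^ p ^ e = 1} :=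
        Nat.card_prod _ _
    _ ≤ m' * p ^ e :=
        Nat.mul_le_mul (aux_roots_field p m' hp hm') (aux_count_Z_odd p k e hp hp2 hk)
    _ = m := by rw [mul_comm]; exact hsplit

lemma aux_prime_pow_two (hk : 1 ≤ k) (hm : 1 ≤ m) :
    Nat.card {x : ZMod (2 ^ k) // x ^ m = 1} ≤ 2 * m := by
  haveI : NeZero (2 ^ k) := ⟨pow_ne_zero _ two_ne_zero⟩
  set e := m.factorization 2 with he
  set m' := m / 2 ^ e with hm'def
  have hsplit : 2 ^ e * m' = m := Nat.ordProj_mul_ordCompl_eq_self m 2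
  have hm' : 1 ≤ m' := Nat.ordCompl_pos 2 (by omega)
  have hpm : ¬ 2 ∣ m' := Nat.not_dvd_ordCompl Nat.prime_two (by omega)
  have hmap2 : ∀ x : {x : ZMod (2 ^ k) // x ^ m = 1}, (x.1 ^ m') ^ 2 ^ e = 1 := by
    rintro ⟨x, hx⟩
    rw [← pow_mul, mul_comm, hsplit, hx]
  have hinj : Function.Injective (fun x : {x : ZMod (2 ^ k) // x ^ m = 1} =>
      (⟨x.1 ^ m', hmap2 x⟩ : {z : ZMod (2 ^ k) // z ^ 2 ^ e = 1})) := by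
    rintro ⟨x₁, hx₁⟩ ⟨x₂, hx₂⟩ h
    simp only [Subtype.mk.injEq] at h
    set u := x₁ * x₂ ^ (m - 1) with hu
    have hx2inv : x₂ * x₂ ^ (m - 1) = 1 := by
      rw [← pow_succ']
      rwa [Nat.sub_add_cancel hm]
    have hum : u ^ m' = 1 := by
      calc u ^ m' = x₁ ^ m' * x₂ ^ ((m - 1) * m') := by rw [hu, mul_pow, ← pow_mul]
        _ = x₂ ^ m' * x₂ ^ ((m - 1) * m') := by rw [h]
        _ = x₂ ^ (m' + (m - 1) * m') := by rw [pow_add]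
        _ = (x₂ ^ m) ^ m' := by
            rw [← pow_mul]
            congr 1
            have hmm : 1 + (m - 1) = m := by omega
            calc m' + (m - 1) * m' = (1 + (m - 1)) * m' := by ring
              _ = m * m' := by rw [hmm]
        _ = 1 := by rw [hx₂, one_pow]
    have hu1 : u = 1 :=
      aux_eq_one 2 k m' Nat.prime_two hk hm' hpm u hum (fun h2 => absurd rfl h2)
    have : x₁ = x₂ := by
      calc x₁ = x₁ * (x₂ * x₂ ^ (m - 1)) := by rw [hx2inv, mul_one]
        _ = u * x₂ := by rw [hu]; ring
        _ = x₂ := by rw [hu1, one_mul]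
    exact Subtype.ext this
  calc Nat.card {x : ZMod (2 ^ k) // x ^ m = 1}
      ≤ Nat.card {z : ZMod (2 ^ k) // z ^ 2 ^ e = 1} := Nat.card_le_card_of_injective _ hinj
    _ ≤ 2 * 2 ^ e := aux_count_Z_two k e hk
    _ ≤ 2 * m := by
        have h2e : 2 ^ e ≤ m := Nat.le_of_dvd (by omega) ⟨m', hsplit.symm⟩
        gcongr

end


lemma aux_mul (a b m : ℕ) (h : a.Coprime b) :
    Nat.card {x : ZMod (a * b) // x ^ m = 1}
      = Nat.card {x : ZMod a // x ^ m = 1} * Nat.card {x : ZMod b // x ^ m = 1} := by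
  rw [← Nat.card_prod]
  apply Nat.card_congr
  refine (Equiv.subtypeEquiv (ZMod.chineseRemainder h).toEquiv ?_).trans
    (Equiv.subtypeProdEquivProd)
  intro x
  constructor
  · intro hx
    have : (ZMod.chineseRemainder h) (x ^ m) = 1 := by rw [hx, map_one]
    rw [map_pow] at this
    constructor
    · have := congrArg Prod.fst this
      simpa using this
    · have := congrArg Prod.snd this
      simpa using this
  · rintro ⟨h1, h2⟩
    apply (ZMod.chineseRemainder h).injective
    rw [map_pow, map_one]
    ext
    · simpa using h1
    · simpa using h2

lemma aux_finset_card (n m : ℕ) (hn : 1 ≤ n) :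
    ((Finset.range n).filter (fun x => x ^ m % n = 1 % n)).card
      = Nat.card {x : ZMod n // x ^ m = 1} := by
  haveI : NeZero n := ⟨by omega⟩
  classical
  rw [Nat.card_eq_fintype_card, Fintype.card_subtype]
  refine Finset.card_bij (fun x _ => ((x : ZMod n))) ?_ ?_ ?_
  · intro x hx
    rw [Finset.mem_filter] at hx ⊢
    refine ⟨Finset.mem_univ _, ?_⟩
    have : ((x ^ m : ℕ) : ZMod n) = ((1 : ℕ) : ZMod n) := by
      rw [ZMod.natCast_eq_natCast_iff]
      exact hx.2
    push_cast at this
    exact this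
  · intro x hx y hy hxy
    have hx' := Finset.mem_range.mp (Finset.mem_filter.mp hx).1
    have hy' := Finset.mem_range.mp (Finset.mem_filter.mp hy).1
    have := congrArg ZMod.val hxy
    rwa [ZMod.val_cast_of_lt hx', ZMod.val_cast_of_lt hy'] at this
  · intro y hy
    rw [Finset.mem_filter] at hy
    refine ⟨y.val, ?_, ?_⟩
    · rw [Finset.mem_filter, Finset.mem_range]
      refine ⟨ZMod.val_lt y, ?_⟩
      rw [← Nat.ModEq]
      rw [← ZMod.natCast_eq_natCast_iff]
      push_cast
      rw [ZMod.natCast_val, ZMod.cast_id]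
      exact hy.2
    · rw [ZMod.natCast_val, ZMod.cast_id]


lemma aux_main (m : ℕ) (hm : 1 ≤ m) : ∀ n : ℕ, 1 ≤ n →
    Nat.card {x : ZMod n // x ^ m = 1}
      ≤ (if 2 ∣ n then 2 else 1) * m ^ n.primeFactors.card := by
  apply Nat.recOnPosPrimePosCoprime
  · -- prime powers
    intro p k hp hk _
    have hp' : p.Prime := hp
    have hωcard : (p ^ k).primeFactors.card = 1 := by
      rw [Nat.primeFactors_prime_pow (by omega) hp']
      simp
    rw [hωcard, pow_one]
    by_cases hp2 : p = 2
    · subst hp2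
      have h2 : (2 : ℕ) ∣ 2 ^ k := dvd_pow_self 2 (by omega)
      rw [if_pos h2]
      exact aux_prime_pow_two k m (by omega) hm
    · have h2 : ¬ (2 : ℕ) ∣ p ^ k := by
        intro h
        have := (Nat.prime_dvd_prime_iff_eq Nat.prime_two hp').mp
          (Nat.Prime.dvd_of_dvd_pow Nat.prime_two h)
        exact hp2 this.symm
      rw [if_neg h2, one_mul]
      exact aux_prime_pow_odd p k m hp' hp2 (by omega) hm
  · exact fun h => absurd h (by omega)
  · -- n = 1
    intro _
    haveI : NeZero (1 : ℕ) := ⟨one_ne_zero⟩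
    have : Nat.card {x : ZMod 1 // x ^ m = 1} ≤ 1 := by
      calc Nat.card {x : ZMod 1 // x ^ m = 1} ≤ Nat.card (ZMod 1) :=
            Nat.card_le_card_of_injective _ Subtype.val_injective
        _ = 1 := by rw [Nat.card_eq_fintype_card, ZMod.card]
      -- fix
    calc Nat.card {x : ZMod 1 // x ^ m = 1} ≤ 1 := this
      _ ≤ _ := by norm_num
  · -- coprime multiplication
    intro a b ha hb hab iha ihb _
    have ha1 : 1 ≤ a := by omega
    have hb1 : 1 ≤ b := by omega
    have hN := aux_mul a b m hab
    have hω : (a * b).primeFactors.card = a.primeFactors.card + b.primeFactors.card := by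
      rw [Nat.Coprime.primeFactors_mul hab,
        Finset.card_union_of_disjoint (Nat.Coprime.disjoint_primeFactors hab)]
    have hc : (if 2 ∣ a * b then 2 else 1) = (if 2 ∣ a then 2 else 1) * (if 2 ∣ b then 2 else 1) := by
      by_cases h2a : 2 ∣ a <;> by_cases h2b : 2 ∣ b
      · exfalso
        have : (2 : ℕ) ∣ Nat.gcd a b := Nat.dvd_gcd h2a h2b
        rw [Nat.Coprime] at hab
        omega
      · rw [if_pos (h2a.mul_right b), if_pos h2a, if_neg h2b]
      · rw [if_pos (h2b.mul_left a), if_neg h2a, if_pos h2b]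
      · have hnab : ¬ (2 : ℕ) ∣ a * b := by
          intro h
          rcases (Nat.prime_two.dvd_mul).mp h with h | h
          · exact h2a h
          · exact h2b h
        rw [if_neg hnab, if_neg h2a, if_neg h2b]
    rw [hN, hω, hc, pow_add]
    calc Nat.card {x : ZMod a // x ^ m = 1} * Nat.card {x : ZMod b // x ^ m = 1}
        ≤ ((if 2 ∣ a then 2 else 1) * m ^ a.primeFactors.card)
          * ((if 2 ∣ b then 2 else 1) * m ^ b.primeFactors.card) :=
          Nat.mul_le_mul (iha ha1) (ihb hb1)
      _ = (if 2 ∣ a then 2 else 1) * (if 2 ∣ b then 2 else 1)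
          * (m ^ a.primeFactors.card * m ^ b.primeFactors.card) := by ring

/-- The number of solutions `x` mod `n` of `x^m ≡ 1 (mod n)` is at most `2·m^ω(n)`. -/
theorem stmt_0 (n m : ℕ) (hn : 1 ≤ n) (hm : 1 ≤ m) :
    ((Finset.range n).filter (fun x => x ^ m % n = 1 % n)).card
      ≤ 2 * m ^ n.primeFactors.card := by
  rw [aux_finset_card n m hn]
  calc Nat.card {x : ZMod n // x ^ m = 1}
      ≤ (if 2 ∣ n then 2 else 1) * m ^ n.primeFactors.card := aux_main m hm n hn
    _ ≤ 2 * m ^ n.primeFactors.card := by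
        apply Nat.mul_le_mul_right
        split <;> omega
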